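/- Let G be a finite noncyclic group and C₀ a cyclic subgroup of G. Then G is a flower group with pistil C₀ if and only if there exist k ≥ 1 and distinct μ-subgroups C₁, …, C_k of G such that C_i ∩ C_j = C₀ for all 1 ≤ i < j ≤ k and |C₁| + |C₂| + ⋯ + |C_k| − (k−1)·|C₀| = |G|. -/

import Mathlib

/-- A cyclic subgroup `C` of `G` is a μ-subgroup if it is not contained in any cyclic
subgroup of `G` other than `C` itself. -/
def IsMuSubgroup {G : Type*} [Group G] (C : Subgroup G) : Prop :=
  IsCyclic ↥C ∧ ∀ K : Subgroup G, IsCyclic ↥K → C ≤ K → C = K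

/-- A noncyclic group `G` is a flower group with pistil `C0` if any two distinct
μ-subgroups of `G` intersect exactly in `C0`. -/
def IsFlowerGroup {G : Type*} [Group G] (C0 : Subgroup G) : Prop :=
  ¬ IsCyclic G ∧
    ∀ C C' : Subgroup G, IsMuSubgroup C → IsMuSubgroup C' → C ≠ C' → C ⊓ C' = C0

lemma isCyclic_zpowers {G : Type*} [Group G] (g : G) : IsCyclic ↥(Subgroup.zpowers g) := by
  refine ⟨⟨⟨g, Subgroup.mem_zpowers g⟩, ?_⟩⟩
  rintro ⟨x, hx⟩
  obtain ⟨n, rfl⟩ := hx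
  exact ⟨n, Subtype.ext (by simp)⟩

lemma mu_generator {G : Type*} [Group G] {D : Subgroup G} (h : IsCyclic ↥D) :
    ∃ d : G, D = Subgroup.zpowers d := by
  obtain ⟨⟨g, hg⟩, hgen⟩ := h
  refine ⟨g, le_antisymm ?_ (by simpa [Subgroup.zpowers_le] using hg)⟩
  intro x hx
  obtain ⟨n, hn⟩ := hgen ⟨x, hx⟩
  exact ⟨n, by simpa using congrArg Subtype.val hn⟩

lemma exists_mu {G : Type*} [Group G] [Finite G] (g : G) :
    ∃ C : Subgroup G, IsMuSubgroup C ∧ g ∈ C := by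
  classical
  have hs : ({K : Subgroup G | IsCyclic ↥K ∧ g ∈ K}).Finite := Set.toFinite _
  have hne : ({K : Subgroup G | IsCyclic ↥K ∧ g ∈ K}).Nonempty :=
    ⟨Subgroup.zpowers g, ⟨isCyclic_zpowers g, Subgroup.mem_zpowers g⟩⟩
  obtain ⟨C, hC, hmax⟩ := hs.exists_maximalFor id _ hne
  exact ⟨C, ⟨hC.1, fun K hK hle => le_antisymm hle (hmax ⟨hK, hle hC.2⟩ hle)⟩, hC.2⟩

/-- If a μ-subgroup's generator lies in a cyclic subgroup, they are equal. -/
lemma mu_eq_of_mem {G : Type*} [Group G] {D K : Subgroup G} (hD : IsMuSubgroup D)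
    (hK : IsCyclic ↥K) {d : G} (hDd : D = Subgroup.zpowers d) (hd : d ∈ K) : D = K :=
  hD.2 K hK (hDd ▸ (Subgroup.zpowers_le).2 hd)

/-- The counting lemma. -/
lemma count_lemma {G : Type*} [Group G] [Fintype G] {k : ℕ} (hk : 1 ≤ k)
    (C : Fin k → Subgroup G) (C0 : Subgroup G) (hle : ∀ i, C0 ≤ C i)
    (hpair : ∀ i j, i ≠ j → C i ⊓ C j = C0) :
    ∑ i, Nat.card (C i) = (⋃ i, (C i : Set G)).ncard + (k - 1) * Nat.card C0 := by
  classical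
  set s0 : Finset G := (C0 : Set G).toFinset with hs0
  set f : Fin k → Finset G := fun i => (C i : Set G).toFinset with hf
  have hcard : ∀ i, Nat.card (C i) = (f i).card := by
    intro i
    rw [hf, Set.toFinset_card, Nat.card_eq_fintype_card]
    rfl
  have hc0 : Nat.card C0 = s0.card := by
    rw [hs0, Set.toFinset_card, Nat.card_eq_fintype_card]
    rfl
  have hsub : ∀ i, s0 ⊆ f i := by
    intro i x hx
    rw [hs0, Set.mem_toFinset] at hx
    rw [hf, Set.mem_toFinset]
    exact hle i hx
  set D : Fin k → Finset G := fun i => f i \ s0 with hD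
  have hdisj : ∀ i ∈ (Finset.univ : Finset (Fin k)), ∀ j ∈ Finset.univ, i ≠ j →
      Disjoint (D i) (D j) := by
    intro i _ j _ hij
    rw [Finset.disjoint_left]
    intro x hxi hxj
    simp only [hD, Finset.mem_sdiff, hf, hs0, Set.mem_toFinset] at hxi hxj
    have : x ∈ C i ⊓ C j := ⟨hxi.1, hxj.1⟩
    rw [hpair i j hij] at this
    exact hxi.2 this
  have hU : (⋃ i, (C i : Set G)).ncard = (Finset.univ.biUnion f).card := by
    rw [Set.ncard_eq_toFinset_card']
    congr 1
    ext x
    simp [hf, Set.mem_toFinset]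
  have hUeq : Finset.univ.biUnion f = s0 ∪ Finset.univ.biUnion D := by
    ext x
    simp only [Finset.mem_biUnion, Finset.mem_union, Finset.mem_univ, true_and, hD,
      Finset.mem_sdiff]
    constructor
    · rintro ⟨i, hi⟩
      by_cases hx0 : x ∈ s0
      · exact Or.inl hx0
      · exact Or.inr ⟨i, hi, hx0⟩
    · rintro (hx0 | ⟨i, hi, -⟩)
      · exact ⟨⟨0, hk⟩, hsub _ hx0⟩
      · exact ⟨i, hi⟩
  have hdisj0 : Disjoint s0 (Finset.univ.biUnion D) := by
    rw [Finset.disjoint_left]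
    intro x hx0 hxD
    simp only [Finset.mem_biUnion, hD, Finset.mem_sdiff] at hxD
    obtain ⟨i, -, -, h⟩ := hxD
    exact h hx0
  have hUcard : (Finset.univ.biUnion f).card = s0.card + ∑ i, (D i).card := by
    rw [hUeq, Finset.card_union_of_disjoint hdisj0, Finset.card_biUnion hdisj]
  have hDi : ∀ i, (D i).card + s0.card = (f i).card := fun i =>
    Finset.card_sdiff_add_card_eq_card (hsub i)
  calc ∑ i, Nat.card (C i) = ∑ i, ((D i).card + s0.card) := by
        simp_rw [hcard, hDi]
    _ = (∑ i, (D i).card) + k * s0.card := by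
        rw [Finset.sum_add_distrib, Finset.sum_const, Finset.card_univ, Fintype.card_fin,
          smul_eq_mul]
    _ = (⋃ i, (C i : Set G)).ncard + (k - 1) * Nat.card C0 := by
        rw [hU, hUcard, hc0]
        obtain ⟨m, rfl⟩ : ∃ m, k = m + 1 := ⟨k - 1, by omega⟩
        simp only [Nat.add_sub_cancel]
        ring

lemma isCyclic_of_top_isCyclic {G : Type*} [Group G] (h : IsCyclic ↥(⊤ : Subgroup G)) :
    IsCyclic G := by
  haveI := h
  exact isCyclic_of_surjective (Subgroup.topEquiv (G := G)) Subgroup.topEquiv.surjective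

/-- G is a flower group with pistil C₀ iff there exist k ≥ 1 and distinct
μ-subgroups C₁,…,C_k with pairwise intersection C₀ and |C₁| + ⋯ + |C_k| − (k−1)|C₀| = |G|. -/
theorem stmt7 {G : Type*} [Group G] [Finite G] (C0 : Subgroup G)
    (hnc : ¬ IsCyclic G) (hc0 : IsCyclic ↥C0) :
    IsFlowerGroup C0 ↔
      ∃ k : ℕ, 1 ≤ k ∧ ∃ C : Fin k → Subgroup G,
        Function.Injective C ∧ (∀ i, IsMuSubgroup (C i)) ∧
        (∀ i j, i ≠ j → C i ⊓ C j = C0) ∧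
        ∑ i, Nat.card (C i) = Nat.card G + (k - 1) * Nat.card C0 := by
  classical
  haveI : Fintype G := Fintype.ofFinite G
  haveI : Fintype (Subgroup G) := Fintype.ofFinite _
  constructor
  · rintro ⟨-, hflower⟩
    set S : Finset (Subgroup G) := Finset.univ.filter IsMuSubgroup with hS
    -- there exist two distinct μ-subgroups
    obtain ⟨M1, hM1, -⟩ := exists_mu (1 : G)
    have hex : ∃ g, g ∉ M1 := by
      by_contra h
      push_neg at h
      have htop : M1 = ⊤ := (Subgroup.eq_top_iff' M1).mpr h
      exact hnc (isCyclic_of_top_isCyclic (htop ▸ hM1.1))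
    obtain ⟨g, hg⟩ := hex
    obtain ⟨M2, hM2, hgM2⟩ := exists_mu g
    have hne12 : M1 ≠ M2 := fun h => hg (h ▸ hgM2)
    have hk2 : 2 ≤ S.card := by
      refine Finset.one_lt_card.2 ⟨M1, ?_, M2, ?_, hne12⟩ <;>
        simp [hS, hM1, hM2]
    set k := S.card with hkdef
    set C : Fin k → Subgroup G := fun i => ((S.equivFin.symm i : {x // x ∈ S}) : Subgroup G)
      with hC
    have hCmem : ∀ i, C i ∈ S := fun i => (S.equivFin.symm i).2
    have hCmu : ∀ i, IsMuSubgroup (C i) := by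
      intro i
      have := hCmem i
      rw [hS, Finset.mem_filter] at this
      exact this.2
    have hinj : Function.Injective C :=
      fun a b h => S.equivFin.symm.injective (Subtype.ext h)
    have hsurj : ∀ D ∈ S, ∃ i, C i = D := by
      intro D hD
      exact ⟨S.equivFin ⟨D, hD⟩, by simp [hC]⟩
    have hpair : ∀ i j, i ≠ j → C i ⊓ C j = C0 := fun i j hij =>
      hflower _ _ (hCmu i) (hCmu j) (fun h => hij (hinj h))
    have hle : ∀ i, C0 ≤ C i := by
      intro i
      set i0 : Fin k := ⟨0, by omega⟩
      set i1 : Fin k := ⟨1, by omega⟩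
      have h01 : i0 ≠ i1 := by simp [i0, i1, Fin.ext_iff]
      set j : Fin k := if i = i0 then i1 else i0 with hj
      have hij : i ≠ j := by
        by_cases h : i = i0 <;> simp [hj, h, h01] <;> exact fun hh => h01 (h ▸ hh ▸ rfl)
      rw [← hpair i j hij]
      exact inf_le_left
    have hcover : (⋃ i, (C i : Set G)) = Set.univ := by
      ext x
      simp only [Set.mem_iUnion, Set.mem_univ, iff_true]
      obtain ⟨D, hD, hxD⟩ := exists_mu x
      obtain ⟨i, hi⟩ := hsurj D (by simp [hS, hD])
      exact ⟨i, hi ▸ hxD⟩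
    refine ⟨k, by omega, C, hinj, hCmu, hpair, ?_⟩
    rw [count_lemma (by omega) C C0 hle hpair, hcover, Set.ncard_univ]
  · rintro ⟨k, hk, C, hinj, hmu, hpair, hsum⟩
    refine ⟨hnc, ?_⟩
    have hk2 : 2 ≤ k := by
      by_contra h
      have hk1 : k = 1 := by omega
      subst hk1
      have hcard : Nat.card (C 0) = Nat.card G := by simpa using hsum
      have htop : C 0 = ⊤ := Subgroup.eq_top_of_card_eq _ hcard
      exact hnc (isCyclic_of_top_isCyclic (htop ▸ (hmu 0).1))
    have hle : ∀ i, C0 ≤ C i := by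
      intro i
      set i0 : Fin k := ⟨0, by omega⟩
      set i1 : Fin k := ⟨1, by omega⟩
      have h01 : i0 ≠ i1 := by simp [i0, i1, Fin.ext_iff]
      set j : Fin k := if i = i0 then i1 else i0 with hj
      have hij : i ≠ j := by
        by_cases h : i = i0 <;> simp [hj, h, h01] <;> exact fun hh => h01 (h ▸ hh ▸ rfl)
      rw [← hpair i j hij]
      exact inf_le_left
    have hcount := count_lemma hk C C0 hle hpair
    rw [hsum] at hcount
    have hUcard : (⋃ i, (C i : Set G)).ncard = Nat.card G :=
      Nat.add_right_cancel hcount.symm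
    have hcover : (⋃ i, (C i : Set G)) = Set.univ := by
      refine Set.eq_of_subset_of_ncard_le (Set.subset_univ _) ?_ (Set.finite_univ)
      rw [Set.ncard_univ, hUcard]
    intro D D' hD hD' hne
    obtain ⟨d, hDd⟩ := mu_generator hD.1
    obtain ⟨d', hD'd⟩ := mu_generator hD'.1
    have hd : d ∈ ⋃ i, (C i : Set G) := hcover ▸ Set.mem_univ d
    have hd' : d' ∈ ⋃ i, (C i : Set G) := hcover ▸ Set.mem_univ d'
    obtain ⟨i, hi⟩ := Set.mem_iUnion.1 hd
    obtain ⟨j, hj⟩ := Set.mem_iUnion.1 hd'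
    have hDi : D = C i := mu_eq_of_mem hD (hmu i).1 hDd hi
    have hD'j : D' = C j := mu_eq_of_mem hD' (hmu j).1 hD'd hj
    have hij : i ≠ j := fun h => hne (by rw [hDi, hD'j, h])
    rw [hDi, hD'j]
    exact hpair i j hij
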